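/- Let d ≥ 1, c > 0 and R > 0. Then there exists N ∈ ℕ such that for every θ ∈ ℝᵈ the set Γ̃_θ := {(γ, |γ|²) ∈ ℝ^{d+1} : γ ∈ θ/(2π) + ℤᵈ} can be decomposed as Γ̃_θ = ⋃_{j=1}^N Γ̃_{θ,j} with 2·(c/δ₁ + ⋯ + c/δ_N) ≤ R, where δ_j := gap(Γ̃_{θ,j}). In particular, N can be chosen uniformly in θ. -/

import Mathlib

open MeasureTheory ENNReal

/-- The gap of a set `X`: the infimum of distances between distinct points of `X`
(`∞` if `X` has at most one element). -/
noncomputable def setGap {n : ℕ} (X : Set (EuclideanSpace ℝ (Fin n))) : ℝ≥0∞ :=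
  ⨅ (x : X) (y : X) (_ : x ≠ y), edist (x : EuclideanSpace ℝ (Fin n)) y

/-- The point `(γ, |γ|²) ∈ ℝ^{d+1}` over `γ ∈ ℝᵈ`. -/
noncomputable def parabPoint (d : ℕ) (γ : Fin d → ℝ) : EuclideanSpace ℝ (Fin (d + 1)) :=
  (WithLp.equiv 2 (Fin (d + 1) → ℝ)).symm (Fin.snoc γ (∑ i, γ i ^ 2))

/-- The graph `Γ̃_θ = {(γ, |γ|²) : γ ∈ θ/(2π) + ℤᵈ} ⊆ ℝ^{d+1}` of the squared norm
over the shifted lattice `θ/(2π) + ℤᵈ`. -/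
noncomputable def tildeGamma (d : ℕ) (θ : Fin d → ℝ) : Set (EuclideanSpace ℝ (Fin (d + 1))) :=
  {p | ∃ k : Fin d → ℤ, p = parabPoint d fun i => θ i / (2 * Real.pi) + (k i : ℝ)}

namespace Stmt10Aux

variable {d : ℕ}

/-- integer dot product -/
def dotZ (x y : Fin d → ℤ) : ℤ := ∑ j, x j * y j

/-- the subgroup (as a set) generated by the `v i` -/
def latt {k : ℕ} (v : Fin k → Fin d → ℤ) : Set (Fin d → ℤ) :=
  {w | ∃ z : Fin k → ℤ, ∑ i, z i • v i = w}

def castR (w : Fin d → ℤ) : Fin d → ℝ := fun j => (w j : ℝ)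

def pts {k : ℕ} (τ : Fin d → ℝ) (v : Fin k → Fin d → ℤ) : Set (Fin d → ℝ) :=
  {x | ∃ w ∈ latt v, τ + castR w = x}

def rdot (x : Fin d → ℝ) (u : Fin d → ℤ) : ℝ := ∑ j, x j * (u j : ℝ)
def qsum (u : Fin d → ℤ) : ℝ := ∑ j, ((u j : ℝ))^2
def hsum (x : Fin d → ℝ) : ℝ := ∑ j, (x j)^2

lemma castR_add (a b : Fin d → ℤ) : castR (a + b) = castR a + castR b := by
  funext j; simp [castR]

lemma castR_eq_zero {u : Fin d → ℤ} (h : castR u = 0) : u = 0 := by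
  funext j
  have := congrFun h j
  simpa [castR] using this

lemma dotZ_sum_left {k : ℕ} (z : Fin k → ℤ) (v : Fin k → Fin d → ℤ) (u : Fin d → ℤ) :
    dotZ (∑ i, z i • v i) u = ∑ i, z i * dotZ (v i) u := by
  unfold dotZ
  have : ∀ j : Fin d, (∑ i, z i • v i) j * u j = ∑ i, z i * (v i j * u j) := by
    intro j
    rw [Finset.sum_apply, Finset.sum_mul]
    congr 1; funext i; simp [mul_assoc]
  calc ∑ j, (∑ i, z i • v i) j * u j = ∑ j, ∑ i, z i * (v i j * u j) := by
        exact Finset.sum_congr rfl fun j _ => this j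
    _ = ∑ i, ∑ j, z i * (v i j * u j) := Finset.sum_comm
    _ = ∑ i, z i * ∑ j, v i j * u j := by
        congr 1; funext i; rw [Finset.mul_sum]

lemma dotZ_self_pos {u : Fin d → ℤ} (h : u ≠ 0) : 0 < dotZ u u := by
  have ⟨j, hj⟩ : ∃ j, u j ≠ 0 := by
    by_contra hc; push_neg at hc; exact h (funext hc)
  refine Finset.sum_pos' (fun i _ => mul_self_nonneg _) ⟨j, Finset.mem_univ j, ?_⟩
  rcases lt_or_gt_of_ne hj with h | h
  · exact mul_pos_of_neg_of_neg h h
  · exact mul_pos h h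

lemma mem_latt_self {k : ℕ} (v : Fin k → Fin d → ℤ) (i : Fin k) : v i ∈ latt v := by
  refine ⟨Pi.single i 1, ?_⟩
  show ∑ l, Pi.single i 1 l • v l = v i
  rw [Finset.sum_eq_single i]
  · simp
  · intro b _ hb; simp [Pi.single_apply, hb]
  · simp

lemma latt_sub {k : ℕ} {v : Fin k → Fin d → ℤ} {a b : Fin d → ℤ}
    (ha : a ∈ latt v) (hb : b ∈ latt v) : b - a ∈ latt v := by
  obtain ⟨za, rfl⟩ := ha
  obtain ⟨zb, rfl⟩ := hb
  refine ⟨zb - za, ?_⟩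
  show ∑ l, (zb - za) l • v l = _
  rw [← Finset.sum_sub_distrib]
  congr 1; funext l; rw [Pi.sub_apply, sub_smul]

lemma rdot_add (x y : Fin d → ℝ) (u : Fin d → ℤ) : rdot (x + y) u = rdot x u + rdot y u := by
  unfold rdot
  rw [← Finset.sum_add_distrib]
  congr 1; funext j; simp [add_mul]

lemma rdot_castR (w u : Fin d → ℤ) : rdot (castR w) u = (dotZ w u : ℝ) := by
  unfold rdot castR dotZ
  push_cast
  rfl

lemma hsum_add_castR (x : Fin d → ℝ) (u : Fin d → ℤ) :
    hsum (x + castR u) = hsum x + 2 * rdot x u + qsum u := by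
  unfold hsum rdot qsum castR
  rw [Finset.mul_sum, ← Finset.sum_add_distrib, ← Finset.sum_add_distrib]
  congr 1; funext j; simp; ring


lemma parab_apply_castSucc (x : Fin d → ℝ) (i : Fin d) :
    parabPoint d x (Fin.castSucc i) = x i := by
  unfold parabPoint
  change (Fin.snoc x (∑ i, x i ^ 2) : Fin (d+1) → ℝ) (Fin.castSucc i) = x i
  exact Fin.snoc_castSucc _ _ _

lemma parab_apply_last (x : Fin d → ℝ) :
    parabPoint d x (Fin.last d) = hsum x := by
  unfold parabPoint
  change (Fin.snoc x (∑ i, x i ^ 2) : Fin (d+1) → ℝ) (Fin.last d) = hsum x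
  exact Fin.snoc_last _ _

lemma dist_parab_sq (x y : Fin d → ℝ) :
    dist (parabPoint d x) (parabPoint d y) ^ 2
      = (∑ j, (x j - y j)^2) + (hsum x - hsum y)^2 := by
  rw [EuclideanSpace.dist_eq, Real.sq_sqrt (Finset.sum_nonneg fun i _ => sq_nonneg _)]
  rw [Fin.sum_univ_castSucc]
  congr 1
  · congr 1; funext j
    rw [parab_apply_castSucc, parab_apply_castSucc, Real.dist_eq, sq_abs]
  · rw [parab_apply_last, parab_apply_last, Real.dist_eq, sq_abs]

lemma spatial_le_dist_sq (x y : Fin d → ℝ) :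
    (∑ j, (x j - y j)^2) ≤ dist (parabPoint d x) (parabPoint d y) ^ 2 := by
  rw [dist_parab_sq]; nlinarith [sq_nonneg (hsum x - hsum y)]

lemma height_le_dist (x y : Fin d → ℝ) :
    |hsum x - hsum y| ≤ dist (parabPoint d x) (parabPoint d y) := by
  have h : (hsum x - hsum y)^2 ≤ dist (parabPoint d x) (parabPoint d y) ^ 2 := by
    rw [dist_parab_sq]
    nlinarith [Finset.sum_nonneg (fun j (_ : j ∈ Finset.univ) => sq_nonneg (x j - y j))]
  calc |hsum x - hsum y| = Real.sqrt ((hsum x - hsum y)^2) := (Real.sqrt_sq_eq_abs _).symm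
    _ ≤ Real.sqrt (dist (parabPoint d x) (parabPoint d y) ^ 2) := Real.sqrt_le_sqrt h
    _ = dist _ _ := Real.sqrt_sq dist_nonneg

lemma le_dist_of_sq {r : ℝ} (x y : Fin d → ℝ) (hr : 0 ≤ r)
    (h : r^2 ≤ ∑ j, (x j - y j)^2) : r ≤ dist (parabPoint d x) (parabPoint d y) := by
  have h2 : r^2 ≤ dist (parabPoint d x) (parabPoint d y) ^ 2 :=
    le_trans h (spatial_le_dist_sq x y)
  calc r = Real.sqrt (r^2) := (Real.sqrt_sq hr).symm
    _ ≤ Real.sqrt (dist (parabPoint d x) (parabPoint d y) ^ 2) := Real.sqrt_le_sqrt h2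
    _ = _ := Real.sqrt_sq dist_nonneg

lemma ofReal_le_edist_of_le_dist {r : ℝ} {p q : EuclideanSpace ℝ (Fin (d+1))}
    (h : r ≤ dist p q) : ENNReal.ofReal r ≤ edist p q := by
  rw [edist_dist]
  exact ENNReal.ofReal_le_ofReal h

lemma le_setGap {S : Set (EuclideanSpace ℝ (Fin (d+1)))} {r : ℝ≥0∞}
    (h : ∀ p ∈ S, ∀ q ∈ S, p ≠ q → r ≤ edist p q) : r ≤ setGap S := by
  refine le_iInf fun p => le_iInf fun q => le_iInf fun hne => ?_
  exact h p p.2 q q.2 (fun hpq => hne (Subtype.ext hpq))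

lemma setGap_of_subsingleton {S : Set (EuclideanSpace ℝ (Fin (d+1)))}
    (h : S.Subsingleton) : setGap S = ⊤ := by
  refine le_antisymm le_top ?_
  refine le_iInf fun p => le_iInf fun q => le_iInf fun hne => ?_
  exact absurd (Subtype.ext (h p.2 q.2)) hne

lemma setGap_empty : setGap (∅ : Set (EuclideanSpace ℝ (Fin (d+1)))) = ⊤ :=
  setGap_of_subsingleton Set.subsingleton_empty


lemma sum_update_general {M : Type*} [AddCommGroup M] {k : ℕ} (F : Fin k → M) (i : Fin k) (c : M) :
    ∑ l, Function.update F i c l = (∑ l, F l) - F i + c := by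
  rw [Finset.sum_update_of_mem (Finset.mem_univ i)]
  rw [Finset.sum_sdiff_eq_sub (Finset.singleton_subset_iff.mpr (Finset.mem_univ i)),
    Finset.sum_singleton]
  abel

lemma sum_smul_update {k : ℕ} (z : Fin k → ℤ) (v : Fin k → Fin d → ℤ) (i : Fin k) (wv : Fin d → ℤ) :
    ∑ l, z l • Function.update v i wv l = (∑ l, z l • v l) - z i • v i + z i • wv := by
  have h : (fun l => z l • Function.update v i wv l)
      = Function.update (fun l => z l • v l) i (z i • wv) := by
    funext l
    rcases eq_or_ne l i with rfl | h
    · simp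
    · simp [Function.update_of_ne h]
  calc ∑ l, z l • Function.update v i wv l
      = ∑ l, Function.update (fun l => z l • v l) i (z i • wv) l := by rw [h]
    _ = _ := by rw [sum_update_general (fun l => z l • v l) i (z i • wv)]

lemma sum_update_smul {k : ℕ} (z : Fin k → ℤ) (v : Fin k → Fin d → ℤ) (i : Fin k) (b : ℤ) :
    ∑ l, Function.update z i b l • v l = (∑ l, z l • v l) - z i • v i + b • v i := by
  have h : (fun l => Function.update z i b l • v l)
      = Function.update (fun l => z l • v l) i (b • v i) := by
    funext l
    rcases eq_or_ne l i with rfl | h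
    · simp
    · simp [Function.update_of_ne h]
  calc ∑ l, Function.update z i b l • v l
      = ∑ l, Function.update (fun l => z l • v l) i (b • v i) l := by rw [h]
    _ = _ := by rw [sum_update_general (fun l => z l • v l) i (b • v i)]

lemma latt_update {k : ℕ} (v : Fin k → Fin d → ℤ) {i j : Fin k} (hij : i ≠ j) (c : ℤ) :
    latt (Function.update v i (v i + c • v j)) = latt v := by
  have hvj : Function.update v i (v i + c • v j) j = v j :=
    Function.update_of_ne (Ne.symm hij) _ _
  ext w
  constructor
  · rintro ⟨z, rfl⟩
    refine ⟨Function.update z j (z j + z i * c), ?_⟩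
    show ∑ l, Function.update z j (z j + z i * c) l • v l
        = ∑ l, z l • Function.update v i (v i + c • v j) l
    rw [sum_update_smul, sum_smul_update, add_smul, smul_add, smul_smul]
    abel
  · rintro ⟨z, rfl⟩
    refine ⟨Function.update z j (z j - z i * c), ?_⟩
    show ∑ l, Function.update z j (z j - z i * c) l • Function.update v i (v i + c • v j) l
        = ∑ l, z l • v l
    rw [sum_update_smul, sum_smul_update, hvj, sub_smul, smul_add, smul_smul]
    abel

lemma latt_comp_equiv {k : ℕ} (v : Fin k → Fin d → ℤ) (σ : Equiv.Perm (Fin k)) :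
    latt (v ∘ σ) = latt v := by
  ext w
  constructor
  · rintro ⟨z, rfl⟩
    refine ⟨z ∘ σ.symm, ?_⟩
    show ∑ l, (z ∘ σ.symm) l • v l = ∑ l, z l • (v ∘ σ) l
    rw [← Equiv.sum_comp σ (fun l => (z ∘ σ.symm) l • v l)]
    simp
  · rintro ⟨z, rfl⟩
    refine ⟨z ∘ σ, ?_⟩
    show ∑ l, (z ∘ σ) l • (v ∘ σ) l = ∑ l, z l • v l
    exact Equiv.sum_comp σ (fun l => z l • v l)

lemma dotZ_add_left (a b u : Fin d → ℤ) : dotZ (a + b) u = dotZ a u + dotZ b u := by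
  unfold dotZ
  rw [← Finset.sum_add_distrib]
  congr 1; funext j; simp [add_mul]

lemma dotZ_smul_left (c : ℤ) (a u : Fin d → ℤ) : dotZ (c • a) u = c * dotZ a u := by
  unfold dotZ
  rw [Finset.mul_sum]
  congr 1; funext j; simp [mul_assoc]

lemma reduce {k : ℕ} (v : Fin (k+1) → Fin d → ℤ) (u : Fin d → ℤ) :
    ∃ v' : Fin (k+1) → Fin d → ℤ, latt v' = latt v ∧ ∀ i : Fin k, dotZ (v' i.succ) u = 0 := by
  suffices H : ∀ (n : ℕ) (v : Fin (k+1) → Fin d → ℤ),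
      (∑ i : Fin k, (dotZ (v i.succ) u).natAbs) ≤ n →
      ∃ v', latt v' = latt v ∧ ∀ i : Fin k, dotZ (v' i.succ) u = 0 by
    exact H _ v le_rfl
  intro n
  induction n with
  | zero =>
    intro v hv
    refine ⟨v, rfl, fun i => ?_⟩
    have := Finset.sum_eq_zero_iff.mp (Nat.le_zero.mp hv) i (Finset.mem_univ i)
    exact Int.natAbs_eq_zero.mp this
  | succ n IH =>
    intro v hv
    by_cases hn : (∑ i : Fin k, (dotZ (v i.succ) u).natAbs) ≤ n
    · exact IH v hn
    have hsum : (∑ i : Fin k, (dotZ (v i.succ) u).natAbs) = n + 1 := le_antisymm hv (by omega)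
    have hex : ∃ j : Fin k, dotZ (v j.succ) u ≠ 0 := by
      by_contra hc
      push_neg at hc
      have : (∑ i : Fin k, (dotZ (v i.succ) u).natAbs) = 0 :=
        Finset.sum_eq_zero fun i _ => by rw [hc i]; rfl
      omega
    obtain ⟨j, hj⟩ := hex
    have hsplit : (∑ i : Fin k, (dotZ (v i.succ) u).natAbs)
        = (dotZ (v j.succ) u).natAbs + ∑ i ∈ Finset.univ \ {j}, (dotZ (v i.succ) u).natAbs :=
      Finset.sum_eq_add_sum_sdiff_singleton_of_mem (Finset.mem_univ j) _
    set B := dotZ (v j.succ) u with hB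
    set A := dotZ (v 0) u with hA
    have h0j : (0 : Fin (k+1)) ≠ j.succ := (Fin.succ_ne_zero j).symm
    set v1 := Function.update v 0 (v 0 + (-(A/B)) • v j.succ) with hv1
    have hL1 : latt v1 = latt v := latt_update v h0j _
    have hd1 : ∀ i : Fin k, dotZ (v1 i.succ) u = dotZ (v i.succ) u := by
      intro i
      rw [hv1, Function.update_of_ne (Fin.succ_ne_zero i)]
    have hA1 : dotZ (v1 0) u = A % B := by
      rw [hv1, Function.update_self, dotZ_add_left, dotZ_smul_left, ← hA, ← hB, Int.emod_def]
      ring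
    have hrnn : 0 ≤ A % B := Int.emod_nonneg A hj
    have hrlt : A % B < ((B.natAbs : ℤ)) := by
      have := Int.emod_lt A hj
      exact this
    have hBpos : 0 < B.natAbs := Int.natAbs_pos.mpr hj
    by_cases hr : A % B = 0
    · -- swap 0 and j.succ
      set v2 := v1 ∘ (Equiv.swap (0 : Fin (k+1)) j.succ) with hv2
      have hL2 : latt v2 = latt v1 := latt_comp_equiv v1 _
      have htail : ∀ i : Fin k, v2 i.succ
          = Function.update (fun i : Fin k => v1 i.succ) j (v1 0) i := by
        intro i
        rcases eq_or_ne i j with rfl | hij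
        · simp [hv2, Equiv.swap_apply_right]
        · have hs : (Equiv.swap (0 : Fin (k+1)) j.succ) i.succ = i.succ :=
            Equiv.swap_apply_of_ne_of_ne (Fin.succ_ne_zero i)
              (fun hc => hij (Fin.succ_injective _ hc))
        
          simp [hv2, hs, Function.update_of_ne hij]
      have hnew : (∑ i : Fin k, (dotZ (v2 i.succ) u).natAbs)
          = (A % B).natAbs + ∑ i ∈ Finset.univ \ {j}, (dotZ (v i.succ) u).natAbs := by
        have : ∀ i : Fin k, (dotZ (v2 i.succ) u).natAbs
            = Function.update (fun i : Fin k => (dotZ (v i.succ) u).natAbs) j (A % B).natAbs i := by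
          intro i
          rcases eq_or_ne i j with rfl | hij
          · rw [htail i, Function.update_self, Function.update_self, hA1]
          · rw [htail i, Function.update_of_ne hij, Function.update_of_ne hij, hd1]
        rw [Finset.sum_congr rfl fun i _ => this i,
          Finset.sum_update_of_mem (Finset.mem_univ j)]
      have hmeas : (∑ i : Fin k, (dotZ (v2 i.succ) u).natAbs) ≤ n := by
        rw [hnew]
        have h0 : (A % B).natAbs = 0 := by rw [hr]; rfl
        omega
      obtain ⟨v', hv'L, hv'd⟩ := IH v2 hmeas
      exact ⟨v', by rw [hv'L, hL2, hL1], hv'd⟩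
    · -- second reduction
      set v2 := Function.update v1 j.succ (v1 j.succ + (-(B/(A % B))) • v1 0) with hv2
      have hL2 : latt v2 = latt v1 := latt_update v1 (Fin.succ_ne_zero j) _
      have hd2 : ∀ i : Fin k, i ≠ j → dotZ (v2 i.succ) u = dotZ (v i.succ) u := by
        intro i hij
        rw [hv2, Function.update_of_ne (fun hc => hij (Fin.succ_injective _ hc)), hd1]
      have hB2 : dotZ (v2 j.succ) u = B % (A % B) := by
        rw [hv2, Function.update_self, dotZ_add_left, dotZ_smul_left, hA1, hd1, ← hB]
        generalize A % B = r
        rw [Int.emod_def]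
        ring
      have hBrnn : 0 ≤ B % (A % B) := Int.emod_nonneg B hr
      have hBrlt : B % (A % B) < A % B := by
        have := Int.emod_lt B hr
        rwa [Int.natAbs_of_nonneg hrnn] at this
      have hnew : (∑ i : Fin k, (dotZ (v2 i.succ) u).natAbs)
          = (B % (A % B)).natAbs + ∑ i ∈ Finset.univ \ {j}, (dotZ (v i.succ) u).natAbs := by
        have : ∀ i : Fin k, (dotZ (v2 i.succ) u).natAbs
            = Function.update (fun i : Fin k => (dotZ (v i.succ) u).natAbs) j
                (B % (A % B)).natAbs i := by
          intro i
          rcases eq_or_ne i j with rfl | hij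
          · rw [Function.update_self, hB2]
          · rw [Function.update_of_ne hij, hd2 i hij]
        rw [Finset.sum_congr rfl fun i _ => this i,
          Finset.sum_update_of_mem (Finset.mem_univ j)]
      have hmeas : (∑ i : Fin k, (dotZ (v2 i.succ) u).natAbs) ≤ n := by
        rw [hnew]
        omega
      obtain ⟨v', hv'L, hv'd⟩ := IH v2 hmeas
      exact ⟨v', by rw [hv'L, hL2, hL1], hv'd⟩


theorem claim (d : ℕ) : ∀ (k : ℕ) (ε : ℝ), 0 < ε → ∃ N : ℕ,
    ∀ (τ : Fin d → ℝ) (v : Fin k → Fin d → ℤ),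
      ∃ Γ : Fin N → Set (EuclideanSpace ℝ (Fin (d+1))),
        (⋃ j, Γ j) = parabPoint d '' pts τ v ∧
        ∑ j, (setGap (Γ j))⁻¹ ≤ ENNReal.ofReal ε := by
  intro k
  induction k with
  | zero =>
    intro ε hε
    refine ⟨1, fun τ v => ⟨fun _ => parabPoint d '' pts τ v, Set.iUnion_const _, ?_⟩⟩
    have hsub : (pts τ v).Subsingleton := by
      rintro x ⟨wx, ⟨zx, rfl⟩, rfl⟩ y ⟨wy, ⟨zy, rfl⟩, rfl⟩
      have : zx = zy := Subsingleton.elim _ _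
      rw [this]
    have hgap : setGap (parabPoint d '' pts τ v) = ⊤ :=
      setGap_of_subsingleton (hsub.image _)
    rw [Fin.sum_univ_one, hgap]
    simp
  | succ n IH =>
    intro ε hε
    classical
    set G : ℕ := max 1 ⌈2/ε⌉₊ with hGdef
    have hG1 : 1 ≤ G := le_max_left _ _
    have hGR : 2/ε ≤ (G:ℝ) := le_trans (Nat.le_ceil _) (Nat.cast_le.mpr (le_max_right _ _))
    have hGpos : (0:ℝ) < G := by exact_mod_cast hG1
    set C : ℕ := Fintype.card ((Fin d → Fin (2*G+1)) × Fin (G+1)) with hCdef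
    have hCpos : 0 < C :=
      Fintype.card_pos_iff.mpr ⟨⟨fun _ => ⟨0, by omega⟩, ⟨0, by omega⟩⟩⟩
    set ε' : ℝ := ε / (2 * C) with hε'def
    have hε'pos : 0 < ε' := by
      apply div_pos hε
      have : (0:ℝ) < C := by exact_mod_cast hCpos
      linarith
    obtain ⟨Nk, hNk⟩ := IH ε' hε'pos
    choose Γk hΓkU hΓkS using hNk
    refine ⟨Fintype.card (Unit ⊕ ((Fin d → Fin (2*G+1)) × Fin (G+1)) × Fin Nk),
      fun τ v => ?_⟩
    set uof : ((Fin d → Fin (2*G+1)) × Fin (G+1)) → Fin d → ℤ :=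
      fun p j => ((p.1 j : ℕ) : ℤ) - G with huof
    set S0 : Set (EuclideanSpace ℝ (Fin (d+1))) :=
      parabPoint d '' {x | x ∈ pts τ v ∧ ∀ u ∈ latt v, u ≠ 0 →
        qsum u ≤ (G:ℝ)^2 → (G:ℝ) < |2 * rdot x u + qsum u|} with hS0
    set badf : (Fin d → ℤ) → ℤ → Fin Nk →
        Set (EuclideanSpace ℝ (Fin (d+1))) := fun u mz i =>
      if h : ∃ l, dotZ (v l) u ≠ 0 then
        (if hg : (dotZ ((reduce v u).choose 0) u) ∣
            (⌈(-(G:ℝ) - qsum u)/2 - rdot τ u⌉ + mz) then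
          Γk (τ + castR (((⌈(-(G:ℝ) - qsum u)/2 - rdot τ u⌉ + mz)
                / (dotZ ((reduce v u).choose 0) u)) • (reduce v u).choose 0))
            (fun l => (reduce v u).choose l.succ) i
        else ∅)
      else ∅ with hbadf
    set bad : ((Fin d → Fin (2*G+1)) × Fin (G+1)) → Fin Nk →
        Set (EuclideanSpace ℝ (Fin (d+1))) := fun p i =>
      badf (uof p) ((p.2 : ℕ) : ℤ) i with hbad
    set Γfull : (Unit ⊕ ((Fin d → Fin (2*G+1)) × Fin (G+1)) × Fin Nk) →
        Set (EuclideanSpace ℝ (Fin (d+1))) :=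
      Sum.elim (fun _ => S0) (fun q => bad q.1 q.2) with hΓfull
    -- bad pieces are inside the full image
    have hbadsub : ∀ u mz i, badf u mz i ⊆ parabPoint d '' pts τ v := by
      intro u mz i x hx
      simp only [hbadf] at hx
      by_cases h1 : ∃ l, dotZ (v l) u ≠ 0
      · rw [dif_pos h1] at hx
        by_cases h2 : (dotZ ((reduce v u).choose 0) u) ∣
            (⌈(-(G:ℝ) - qsum u)/2 - rdot τ u⌉ + mz)
        · rw [dif_pos h2] at hx
          obtain ⟨hlatt, _⟩ := (reduce v u).choose_spec
          have hx2 : x ∈ ⋃ i, Γk _ _ i := Set.mem_iUnion.mpr ⟨i, hx⟩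
          rw [hΓkU] at hx2
          obtain ⟨y, ⟨w, hw, rfl⟩, rfl⟩ := hx2
          obtain ⟨z, hz⟩ := hw
          refine ⟨_, ⟨((⌈(-(G:ℝ) - qsum u)/2 - rdot τ u⌉ + mz)
              / (dotZ ((reduce v u).choose 0) u))
              • (reduce v u).choose 0 + w, ?_, ?_⟩, rfl⟩
          · have hmem' : ((⌈(-(G:ℝ) - qsum u)/2 - rdot τ u⌉ + mz)
                / (dotZ ((reduce v u).choose 0) u))
                • (reduce v u).choose 0 + w ∈ latt ((reduce v u).choose) := by
              refine ⟨Fin.cons (((⌈(-(G:ℝ) - qsum u)/2 - rdot τ u⌉ + mz)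
                / (dotZ ((reduce v u).choose 0) u))) z, ?_⟩
              rw [Fin.sum_univ_succ]
              simp only [Fin.cons_zero, Fin.cons_succ]
              rw [← hz]
            exact (Set.ext_iff.mp hlatt _).mp hmem'
          · rw [castR_add]
            funext j
            simp [add_assoc]
        · rw [dif_neg h2] at hx
          exact absurd hx (Set.notMem_empty x)
      · rw [dif_neg h1] at hx
        exact absurd hx (Set.notMem_empty x)
    -- union equality
    have hU : (⋃ j, Γfull j) = parabPoint d '' pts τ v := by
      apply Set.Subset.antisymm
      · refine Set.iUnion_subset ?_
        rintro (⟨⟩ | ⟨p, i⟩)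
        · rw [hΓfull]
          exact Set.image_mono (fun x hx => hx.1)
        · rw [hΓfull]
          exact hbadsub (uof p) _ i
      · rintro x ⟨y, hy, rfl⟩
        by_cases hgood : ∀ u ∈ latt v, u ≠ 0 →
            qsum u ≤ (G:ℝ)^2 → (G:ℝ) < |2 * rdot y u + qsum u|
        · exact Set.mem_iUnion.mpr ⟨Sum.inl (), ⟨y, ⟨hy, hgood⟩, rfl⟩⟩
        · push_neg at hgood
          obtain ⟨u₀, hu₀l, hu₀ne, hu₀q, hu₀res⟩ := hgood
          -- component bounds
          have hcomp : ∀ j, -(G:ℤ) ≤ u₀ j ∧ u₀ j ≤ G := by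
            intro j
            have h1 : ((u₀ j : ℝ))^2 ≤ (G:ℝ)^2 :=
              le_trans (Finset.single_le_sum (f := fun j => ((u₀ j:ℝ))^2)
                (fun _ _ => sq_nonneg _) (Finset.mem_univ j)) hu₀q
            constructor
            · exact_mod_cast (by nlinarith : -(G:ℝ) ≤ (u₀ j : ℝ))
            · exact_mod_cast (by nlinarith : ((u₀ j : ℝ)) ≤ G)
          have hbnd : ∀ j, (u₀ j + G).toNat < 2*G+1 := by
            intro j
            have := hcomp j
            omega
          set p1 : Fin d → Fin (2*G+1) := fun j => ⟨(u₀ j + G).toNat, hbnd j⟩ with hp1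
          have hup : ∀ m : Fin (G+1), uof (p1, m) = u₀ := by
            intro m
            funext j
            rw [huof]
            simp only [hp1]
            have := hcomp j
            omega
          -- a ≠ 0
          have hA : ∃ l, dotZ (v l) u₀ ≠ 0 := by
            by_contra hc
            push_neg at hc
            obtain ⟨z0, hz0⟩ := hu₀l
            have : dotZ u₀ u₀ = 0 := by
              have h2 : dotZ (∑ l, z0 l • v l) u₀ = 0 := by
                rw [dotZ_sum_left]
                exact Finset.sum_eq_zero fun l _ => by rw [hc l, mul_zero]
              rw [← h2]
              congr 1
              exact hz0.symm
            exact absurd this (ne_of_gt (dotZ_self_pos hu₀ne))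
          obtain ⟨hlatt, htail⟩ := (reduce v u₀).choose_spec
          have hgne : dotZ ((reduce v u₀).choose 0) u₀ ≠ 0 := by
            intro hg0
            obtain ⟨l0, hl0⟩ := hA
            have hvl : v l0 ∈ latt ((reduce v u₀).choose) := by
              rw [hlatt]; exact mem_latt_self v l0
            obtain ⟨zz, hzz⟩ := hvl
            apply hl0
            rw [← hzz, dotZ_sum_left, Fin.sum_univ_succ, hg0, mul_zero, zero_add]
            exact Finset.sum_eq_zero fun l _ => by rw [htail l, mul_zero]
          obtain ⟨w, hw, rfl⟩ := hy
          have hw' : w ∈ latt ((reduce v u₀).choose) := by rw [hlatt]; exact hw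
          obtain ⟨z, hz⟩ := hw'
          have ht : dotZ w u₀ = z 0 * dotZ ((reduce v u₀).choose 0) u₀ := by
            rw [← hz, dotZ_sum_left, Fin.sum_univ_succ]
            rw [Finset.sum_eq_zero fun l _ => by rw [htail l, mul_zero], add_zero]
          have hrdot : rdot (τ + castR w) u₀ = rdot τ u₀ + ((dotZ w u₀ : ℤ) : ℝ) := by
            rw [rdot_add, rdot_castR]
          have habs := abs_le.mp hu₀res
          rw [hrdot] at habs
          have hceil1 : ⌈(-(G:ℝ) - qsum u₀)/2 - rdot τ u₀⌉ ≤ dotZ w u₀ := by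
            apply Int.ceil_le.mpr
            push_cast
            linarith [habs.1]
          have hceil2 : dotZ w u₀ ≤ ⌈(-(G:ℝ) - qsum u₀)/2 - rdot τ u₀⌉ + G := by
            have h3 : ((dotZ w u₀ - G : ℤ) : ℝ) ≤ (-(G:ℝ) - qsum u₀)/2 - rdot τ u₀ := by push_cast; linarith [habs.2]
            have h4 : (dotZ w u₀ - G : ℤ) ≤ ⌈(-(G:ℝ) - qsum u₀)/2 - rdot τ u₀⌉ :=
              Int.cast_le.mp (le_trans h3 (Int.le_ceil _))
            omega
          have hmbnd : (dotZ w u₀ - ⌈(-(G:ℝ) - qsum u₀)/2 - rdot τ u₀⌉).toNat < G + 1 := by omega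
          have hdvd' : dotZ ((reduce v u₀).choose 0) u₀ ∣ dotZ w u₀ := by
            rw [ht]; exact dvd_mul_left _ _
          have hscal' : dotZ w u₀ / dotZ ((reduce v u₀).choose 0) u₀ = z 0 := by
            rw [ht]; exact Int.mul_ediv_cancel _ hgne
          have hx2 : parabPoint d (τ + castR w)
              ∈ parabPoint d '' pts (τ + castR ((z 0) • (reduce v u₀).choose 0))
                  (fun l => (reduce v u₀).choose l.succ) := by
            refine ⟨τ + castR w, ⟨∑ l : Fin n, z l.succ • (reduce v u₀).choose l.succ,
              ⟨fun l => z l.succ, rfl⟩, ?_⟩, rfl⟩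
            have hwsplit : w = z 0 • (reduce v u₀).choose 0
                + ∑ l : Fin n, z l.succ • (reduce v u₀).choose l.succ := by
              rw [← hz, Fin.sum_univ_succ]
            rw [hwsplit, castR_add]
            funext j
            simp [add_assoc]
          rw [← hΓkU] at hx2
          obtain ⟨i, hi⟩ := Set.mem_iUnion.mp hx2
          refine Set.mem_iUnion.mpr
            ⟨Sum.inr ((p1, ⟨(dotZ w u₀ - ⌈(-(G:ℝ) - qsum u₀)/2 - rdot τ u₀⌉).toNat, hmbnd⟩), i), ?_⟩
          rw [hΓfull]
          show _ ∈ bad (p1, ⟨(dotZ w u₀ - ⌈(-(G:ℝ) - qsum u₀)/2 - rdot τ u₀⌉).toNat, hmbnd⟩) i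
          have harg : ((((dotZ w u₀ - ⌈(-(G:ℝ) - qsum u₀)/2 - rdot τ u₀⌉).toNat : ℕ)) : ℤ)
              = dotZ w u₀ - ⌈(-(G:ℝ) - qsum u₀)/2 - rdot τ u₀⌉ :=
            Int.toNat_of_nonneg (by omega)
          have hbb : bad (p1, ⟨(dotZ w u₀ - ⌈(-(G:ℝ) - qsum u₀)/2 - rdot τ u₀⌉).toNat, hmbnd⟩) i
              = badf u₀ (dotZ w u₀ - ⌈(-(G:ℝ) - qsum u₀)/2 - rdot τ u₀⌉) i := by
            simp only [hbad, hup]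
            rw [harg]
          rw [hbb]
          simp only [hbadf]
          rw [show ⌈(-(G:ℝ) - qsum u₀)/2 - rdot τ u₀⌉ + (dotZ w u₀ - ⌈(-(G:ℝ) - qsum u₀)/2 - rdot τ u₀⌉) = dotZ w u₀ from by ring]
          rw [dif_pos hA, dif_pos hdvd', hscal']
          exact hi
    -- gap bound for the good piece
    have hgoodgap : ENNReal.ofReal (G:ℝ) ≤ setGap S0 := by
      rw [hS0]
      apply le_setGap
      rintro pp ⟨x, ⟨hx, hgx⟩, rfl⟩ qq ⟨y, ⟨hy, hgy⟩, rfl⟩ hne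
      obtain ⟨wx, hwx, rfl⟩ := hx
      obtain ⟨wy, hwy, rfl⟩ := hy
      set u := wy - wx with hu
      have hulat : u ∈ latt v := latt_sub hwx hwy
      have hyx : τ + castR wy = (τ + castR wx) + castR u := by
        rw [hu]
        funext j
        simp [castR]
      have hune : u ≠ 0 := by
        intro h0
        apply hne
        have : wy = wx := by
          have := sub_eq_zero.mp (hu ▸ h0)
          exact this
        rw [this]
      rcases le_or_gt (qsum u) ((G:ℝ)^2) with hq | hq
      · have hgood := hgx u hulat hune hq
        refine ofReal_le_edist_of_le_dist ?_
        have hh : hsum (τ + castR wy) - hsum (τ + castR wx)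
            = 2 * rdot (τ + castR wx) u + qsum u := by
          rw [hyx, hsum_add_castR]
          ring
        calc (G:ℝ) ≤ |2 * rdot (τ + castR wx) u + qsum u| := le_of_lt hgood
          _ = |hsum (τ + castR wx) - hsum (τ + castR wy)| := by rw [← hh, abs_sub_comm]
          _ ≤ dist (parabPoint d (τ + castR wx)) (parabPoint d (τ + castR wy)) :=
            height_le_dist _ _
      · refine ofReal_le_edist_of_le_dist (le_dist_of_sq _ _ (le_of_lt hGpos) ?_)
        have hterm : ∀ j, ((τ + castR wx) j - (τ + castR wy) j)^2 = ((u j : ℝ))^2 := by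
          intro j
          rw [hyx]
          simp [castR]
        rw [Finset.sum_congr rfl fun j _ => hterm j]
        exact le_of_lt hq
    -- sum bound
    have hCne : (C:ℝ) ≠ 0 := by
      have : (0:ℝ) < C := by exact_mod_cast hCpos
      linarith
    have hS : ∑ j, (setGap (Γfull j))⁻¹ ≤ ENNReal.ofReal ε := by
      rw [Fintype.sum_sum_type]
      have h1 : ∑ _x : Unit, (setGap (Γfull (Sum.inl _x)))⁻¹ ≤ ENNReal.ofReal (ε/2) := by
        rw [Fintype.sum_unique]
        have e1 : (setGap (Γfull (Sum.inl ())))⁻¹ ≤ (ENNReal.ofReal (G:ℝ))⁻¹ :=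
          ENNReal.inv_le_inv.mpr (by rw [hΓfull]; exact hgoodgap)
        refine le_trans e1 ?_
        rw [← ENNReal.ofReal_inv_of_pos hGpos]
        apply ENNReal.ofReal_le_ofReal
        have h2 : 2 ≤ (G:ℝ) * ε := (div_le_iff₀ hε).mp hGR
        rw [inv_eq_one_div, div_le_div_iff₀ hGpos (by norm_num : (0:ℝ) < 2)]
        nlinarith
      have h2 : ∑ q : ((Fin d → Fin (2*G+1)) × Fin (G+1)) × Fin Nk,
          (setGap (Γfull (Sum.inr q)))⁻¹ ≤ ENNReal.ofReal (ε/2) := by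
        rw [Fintype.sum_prod_type]
        have hper : ∀ p : (Fin d → Fin (2*G+1)) × Fin (G+1),
            ∑ i : Fin Nk, (setGap (Γfull (Sum.inr (p, i))))⁻¹ ≤ ENNReal.ofReal ε' := by
          intro p
          have hΓeq : ∀ i, Γfull (Sum.inr (p, i)) = badf (uof p) ((p.2 : ℕ) : ℤ) i := by
            intro i
            simp only [hΓfull, Sum.elim_inr, hbad]
          by_cases hc1 : ∃ l, dotZ (v l) (uof p) ≠ 0
          · by_cases hc2 : (dotZ ((reduce v (uof p)).choose 0) (uof p)) ∣
                (⌈(-(G:ℝ) - qsum (uof p))/2 - rdot τ (uof p)⌉ + ((p.2 : ℕ) : ℤ))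
            · have heq : ∀ i, Γfull (Sum.inr (p, i))
                  = Γk (τ + castR (((⌈(-(G:ℝ) - qsum (uof p))/2 - rdot τ (uof p)⌉ + ((p.2 : ℕ) : ℤ))
                      / (dotZ ((reduce v (uof p)).choose 0) (uof p))) • (reduce v (uof p)).choose 0))
                      (fun l => (reduce v (uof p)).choose l.succ) i := by
                intro i
                rw [hΓeq i]
                simp only [hbadf]
                rw [dif_pos hc1, dif_pos hc2]
              rw [Finset.sum_congr rfl fun i _ => by rw [heq i]]
              exact hΓkS _ _
            · have heq : ∀ i, Γfull (Sum.inr (p, i)) = ∅ := by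
                intro i
                rw [hΓeq i]
                simp only [hbadf]
                rw [dif_pos hc1, dif_neg hc2]
              rw [Finset.sum_congr rfl fun i _ => by rw [heq i, setGap_empty, ENNReal.inv_top]]
              rw [Finset.sum_const, smul_zero]
              positivity
          · have heq : ∀ i, Γfull (Sum.inr (p, i)) = ∅ := by
              intro i
              rw [hΓeq i]
              simp only [hbadf]
              rw [dif_neg hc1]
            rw [Finset.sum_congr rfl fun i _ => by rw [heq i, setGap_empty, ENNReal.inv_top]]
            rw [Finset.sum_const, smul_zero]
            positivity
        calc ∑ p : ((Fin d → Fin (2*G+1)) × Fin (G+1)),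
              ∑ i : Fin Nk, (setGap (Γfull (Sum.inr (p, i))))⁻¹
            ≤ ∑ _p : ((Fin d → Fin (2*G+1)) × Fin (G+1)), ENNReal.ofReal ε' :=
              Finset.sum_le_sum fun p _ => hper p
          _ = C • ENNReal.ofReal ε' := by
              rw [Finset.sum_const, Finset.card_univ]
          _ = ENNReal.ofReal (C * ε') := by
              rw [nsmul_eq_mul, ← ENNReal.ofReal_natCast C,
                ← ENNReal.ofReal_mul (by positivity)]
          _ = ENNReal.ofReal (ε/2) := by
              congr 1
              rw [hε'def]
              field_simp
      calc (∑ _x : Unit, (setGap (Γfull (Sum.inl _x)))⁻¹)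
            + ∑ q : ((Fin d → Fin (2*G+1)) × Fin (G+1)) × Fin Nk,
              (setGap (Γfull (Sum.inr q)))⁻¹
          ≤ ENNReal.ofReal (ε/2) + ENNReal.ofReal (ε/2) := add_le_add h1 h2
        _ = ENNReal.ofReal ε := by
            rw [← ENNReal.ofReal_add (by linarith) (by linarith)]
            norm_num
    -- transport to Fin N
    refine ⟨fun j => Γfull ((Fintype.equivFin
      (Unit ⊕ ((Fin d → Fin (2*G+1)) × Fin (G+1)) × Fin Nk)).symm j), ?_, ?_⟩
    · rw [← hU]
      exact (Fintype.equivFin _).symm.surjective.iUnion_comp _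
    · rw [Equiv.sum_comp ((Fintype.equivFin
        (Unit ⊕ ((Fin d → Fin (2*G+1)) × Fin (G+1)) × Fin Nk)).symm)
        (fun j => (setGap (Γfull j))⁻¹)]
      exact hS

lemma latt_single_mem (w : Fin d → ℤ) :
    w ∈ latt (fun i : Fin d => (Pi.single i 1 : Fin d → ℤ)) := by
  refine ⟨w, ?_⟩
  funext j
  rw [Finset.sum_apply]
  rw [Finset.sum_eq_single j]
  · simp
  · intro b _ hb
    simp [Pi.single_apply, hb]
  · simp

end Stmt10Aux

open Stmt10Aux

theorem stmt10 (d : ℕ) (hd : 1 ≤ d) (c R : ℝ) (hc : 0 < c) (hR : 0 < R) :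
    ∃ N : ℕ, ∀ θ : Fin d → ℝ,
      ∃ Γ : Fin N → Set (EuclideanSpace ℝ (Fin (d + 1))),
        (⋃ j, Γ j) = tildeGamma d θ ∧
        2 * ∑ j, ENNReal.ofReal c / setGap (Γ j) ≤ ENNReal.ofReal R := by
  classical
  obtain ⟨N, hN⟩ := Stmt10Aux.claim d d (R/(2*c)) (by positivity)
  refine ⟨N, fun θ => ?_⟩
  obtain ⟨Γ, hU, hSum⟩ := hN (fun i => θ i / (2 * Real.pi))
    (fun i => (Pi.single i 1 : Fin d → ℤ))
  refine ⟨Γ, ?_, ?_⟩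
  · rw [hU]
    ext p
    constructor
    · rintro ⟨x, ⟨w, _hw, rfl⟩, rfl⟩
      refine ⟨w, ?_⟩
      have harg : ((fun i => θ i / (2 * Real.pi)) + castR w)
          = fun i => θ i / (2 * Real.pi) + (w i : ℝ) := by
        funext i
        simp [castR]
      rw [harg]
    · rintro ⟨k, rfl⟩
      refine ⟨fun i => θ i / (2 * Real.pi) + (k i : ℝ), ⟨k, latt_single_mem k, ?_⟩, rfl⟩
      funext i
      simp [castR]
  · have hstep : ∑ j, ENNReal.ofReal c / setGap (Γ j)
        = ENNReal.ofReal c * ∑ j, (setGap (Γ j))⁻¹ := by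
      rw [Finset.mul_sum]
      exact Finset.sum_congr rfl fun j _ => div_eq_mul_inv _ _
    rw [hstep]
    calc 2 * (ENNReal.ofReal c * ∑ j, (setGap (Γ j))⁻¹)
        ≤ 2 * (ENNReal.ofReal c * ENNReal.ofReal (R/(2*c))) :=
          mul_le_mul_right (mul_le_mul_right hSum _) 2
      _ = ENNReal.ofReal R := by
          rw [← ENNReal.ofReal_mul hc.le]
          rw [show c * (R/(2*c)) = R/2 by field_simp]
          rw [show (2:ℝ≥0∞) = ENNReal.ofReal 2 from (ENNReal.ofReal_ofNat 2).symm]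
          rw [← ENNReal.ofReal_mul (by norm_num)]
          congr 1
          ring
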